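/- Let ε > 0, let β > 0, let ψ : ℝ → ℝ be even, convex, and differentiable with a β-Lipschitzian derivative, and define the smoothed Vapnik loss φ : ℝ → ℝ by φ(ξ) = ψ(max(|ξ| − ε, 0)). Then φ is convex and differentiable with a β-Lipschitzian derivative, φ'(ξ) = ψ'(|ξ| − ε) sign(ξ) if |ξ| > ε and φ'(ξ) = 0 if |ξ| ≤ ε, and for every γ > 0 and every ξ ∈ ℝ, prox_{γφ} ξ = (ε + prox_{γψ}(|ξ| − ε)) sign(ξ) if |ξ| > ε, while prox_{γφ} ξ = ξ if |ξ| ≤ ε. -/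

import Mathlib

open Filter Asymptotics Set


lemma sv_psi'0 (ψ ψ' : ℝ → ℝ) (heven : ∀ t, ψ (-t) = ψ t)
    (hderiv : ∀ t, HasDerivAt ψ (ψ' t) t) : ψ' 0 = 0 := by
  have h1 : HasDerivAt (fun t : ℝ => ψ (-t)) (-ψ' 0) 0 := by
    simpa [Function.comp_def] using (hderiv (-(0:ℝ))).comp 0 (hasDerivAt_neg (0:ℝ))
  have h2 : HasDerivAt ψ (-ψ' 0) 0 := by
    have : (fun t : ℝ => ψ (-t)) = ψ := funext heven
    rwa [this] at h1
  have := h2.unique (hderiv 0)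
  linarith

lemma sv_mono (ψ ψ' : ℝ → ℝ) (hconv : ConvexOn ℝ Set.univ ψ)
    (hderiv : ∀ t, HasDerivAt ψ (ψ' t) t) : Monotone ψ' := by
  have h := hconv.monotoneOn_deriv (fun x _ => (hderiv x).differentiableAt)
  have hd : deriv ψ = ψ' := funext fun t => (hderiv t).deriv
  rw [hd] at h
  exact monotoneOn_univ.mp h

lemma sv_hasDeriv (ε β : ℝ) (hε : 0 < ε) (hβ : 0 < β)
    (ψ ψ' : ℝ → ℝ) (hψ'0 : ψ' 0 = 0)
    (hderiv : ∀ t, HasDerivAt ψ (ψ' t) t)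
    (hlip : LipschitzWith (Real.toNNReal β) ψ')
    (φ : ℝ → ℝ) (hdef : ∀ ξ, φ ξ = ψ (max (|ξ| - ε) 0)) (ξ : ℝ) :
    HasDerivAt φ (ψ' (max (|ξ| - ε) 0) * Real.sign ξ) ξ := by
  rcases le_or_gt (|ξ|) ε with h | h
  · -- |ξ| ≤ ε : derivative 0
    have hval : ψ' (max (|ξ| - ε) 0) * Real.sign ξ = 0 := by
      rw [max_eq_right (by linarith), hψ'0, zero_mul]
    rw [hval, hasDerivAt_iff_isLittleO]
    simp only [smul_zero, sub_zero]
    have hφξ : φ ξ = ψ 0 := by rw [hdef, max_eq_right (by linarith)]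
    have hψb : ∀ u : ℝ, 0 ≤ u → |ψ u - ψ 0| ≤ β * u * u := by
      intro u hu
      have hc : Convex ℝ (Icc (0:ℝ) u) := convex_Icc 0 u
      have hb : ∀ s ∈ Icc (0:ℝ) u, ‖ψ' s‖ ≤ β * u := by
        intro s hs
        have := hlip.dist_le_mul s 0
        simp only [Real.dist_eq, sub_zero, Real.coe_toNNReal β hβ.le] at this
        rw [Real.norm_eq_abs]
        calc |ψ' s| = |ψ' s - ψ' 0| := by rw [hψ'0, sub_zero]
          _ ≤ β * |s| := this
          _ ≤ β * u := by
              rw [abs_of_nonneg hs.1]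
              exact mul_le_mul_of_nonneg_left hs.2 hβ.le
      have := hc.norm_image_sub_le_of_norm_hasDerivWithin_le
        (fun s hs => (hderiv s).hasDerivWithinAt) hb
        (left_mem_Icc.mpr hu) (right_mem_Icc.mpr hu)
      rw [Real.norm_eq_abs, Real.norm_eq_abs, sub_zero, abs_of_nonneg hu] at this
      exact this
    have hbound : ∀ t : ℝ, |φ t - φ ξ| ≤ β * |t - ξ| * |t - ξ| := by
      intro t
      have hm0 : (0:ℝ) ≤ max (|t| - ε) 0 := le_max_right _ _
      have hmle : max (|t| - ε) 0 ≤ |t - ξ| := by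
        apply max_le _ (abs_nonneg _)
        have := abs_sub_abs_le_abs_sub t ξ
        linarith
      rw [hdef t, hφξ]
      calc |ψ (max (|t| - ε) 0) - ψ 0| ≤ β * max (|t| - ε) 0 * max (|t| - ε) 0 :=
            hψb _ hm0
        _ ≤ β * |t - ξ| * |t - ξ| := by
            have := mul_le_mul hmle hmle hm0 (abs_nonneg (t - ξ))
            nlinarith
    rw [isLittleO_iff]
    intro c hc
    filter_upwards [Metric.ball_mem_nhds ξ (show (0:ℝ) < c / β by positivity)] with t ht
    have ht' : |t - ξ| < c / β := by simpa [Real.dist_eq] using ht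
    rw [Real.norm_eq_abs, Real.norm_eq_abs]
    calc |φ t - φ ξ| ≤ β * |t - ξ| * |t - ξ| := hbound t
      _ ≤ c * |t - ξ| := by
          have h2 : β * |t - ξ| ≤ c := by
            have := mul_le_mul_of_nonneg_left ht'.le hβ.le
            rw [mul_div_cancel₀ c hβ.ne'] at this
            exact this
          have := mul_le_mul_of_nonneg_right h2 (abs_nonneg (t - ξ))
          linarith
  · rcases lt_trichotomy ξ 0 with hξ | hξ | hξ
    · -- ξ < -ε
      have hξε : ξ < -ε := by rw [abs_of_neg hξ] at h; linarith
      have hval : max (|ξ| - ε) 0 = -ξ - ε := by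
        rw [abs_of_neg hξ]; exact max_eq_left (by linarith)
      have h1 : HasDerivAt (fun t : ℝ => ψ (-t - ε)) (-ψ' (-ξ - ε)) ξ := by
        have := (hderiv (-ξ - ε)).comp ξ (((hasDerivAt_neg ξ)).sub_const ε)
        simpa [mul_comm, Function.comp_def] using this
      have heq : φ =ᶠ[nhds ξ] fun t : ℝ => ψ (-t - ε) := by
        filter_upwards [Iio_mem_nhds hξε] with t ht
        rw [Set.mem_Iio] at ht
        rw [hdef, abs_of_neg (by linarith : t < 0), max_eq_left (by linarith)]
      have h2 := h1.congr_of_eventuallyEq heq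
      rw [hval, Real.sign_of_neg hξ]
      simpa using h2
    · exfalso; rw [hξ] at h; simp at h; linarith
    · -- ξ > ε
      have hξε : ε < ξ := by rwa [abs_of_pos hξ] at h
      have hval : max (|ξ| - ε) 0 = ξ - ε := by
        rw [abs_of_pos hξ]; exact max_eq_left (by linarith)
      have h1 : HasDerivAt (fun t : ℝ => ψ (t - ε)) (ψ' (ξ - ε)) ξ := by
        have := (hderiv (ξ - ε)).comp ξ ((hasDerivAt_id ξ).sub_const ε)
        simpa [Function.comp_def] using this
      have heq : φ =ᶠ[nhds ξ] fun t : ℝ => ψ (t - ε) := by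
        filter_upwards [Ioi_mem_nhds hξε] with t ht
        rw [Set.mem_Ioi] at ht
        rw [hdef, abs_of_pos (by linarith : (0:ℝ) < t), max_eq_left (by linarith)]
      have h2 := h1.congr_of_eventuallyEq heq
      rw [hval, Real.sign_of_pos hξ]
      simpa using h2
section
variable (ε β : ℝ) (ψ' : ℝ → ℝ)

lemma sv_Dpos (hε : 0 < ε) (hψ'0 : ψ' 0 = 0) (x : ℝ) (hx : 0 ≤ x) :
    ψ' (max (|x| - ε) 0) * Real.sign x = ψ' (max (x - ε) 0) := by
  rcases hx.eq_or_lt with rfl | h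
  · rw [Real.sign_zero, mul_zero, max_eq_right (by linarith), hψ'0]
  · rw [abs_of_pos h, Real.sign_of_pos h, mul_one]

lemma sv_Dneg (hε : 0 < ε) (hψ'0 : ψ' 0 = 0) (x : ℝ) (hx : x ≤ 0) :
    ψ' (max (|x| - ε) 0) * Real.sign x = -(ψ' (max (-x - ε) 0)) := by
  have := sv_Dpos ε ψ' hε hψ'0 (-x) (by linarith)
  rw [abs_neg, Real.sign_neg] at this
  linarith [this]

lemma sv_Dmono (hε : 0 < ε) (hψ'0 : ψ' 0 = 0) (hmono : Monotone ψ') :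
    Monotone (fun ξ : ℝ => ψ' (max (|ξ| - ε) 0) * Real.sign ξ) := by
  have hnn : ∀ x : ℝ, 0 ≤ ψ' (max (x - ε) 0) := by
    intro x
    have := hmono (le_max_right (x - ε) 0)
    rwa [hψ'0] at this
  intro x y hxy
  simp only
  rcases le_total 0 x with hx | hx
  · rw [sv_Dpos ε ψ' hε hψ'0 x hx, sv_Dpos ε ψ' hε hψ'0 y (hx.trans hxy)]
    exact hmono (max_le_max (by linarith) le_rfl)
  · rcases le_total y 0 with hy | hy
    · rw [sv_Dneg ε ψ' hε hψ'0 x hx, sv_Dneg ε ψ' hε hψ'0 y hy]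
      have := hmono (max_le_max (show -y - ε ≤ -x - ε by linarith) (le_refl (0:ℝ)))
      linarith
    · rw [sv_Dneg ε ψ' hε hψ'0 x hx, sv_Dpos ε ψ' hε hψ'0 y hy]
      have h1 := hnn (-x)
      have h2 := hnn y
      linarith

lemma sv_Dlip (hε : 0 < ε) (hβ : 0 < β) (hψ'0 : ψ' 0 = 0)
    (hmono : Monotone ψ') (hlip : LipschitzWith (Real.toNNReal β) ψ') :
    LipschitzWith (Real.toNNReal β) (fun ξ : ℝ => ψ' (max (|ξ| - ε) 0) * Real.sign ξ) := by
  have hlipR : ∀ a b : ℝ, |ψ' a - ψ' b| ≤ β * |a - b| := by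
    intro a b
    have := hlip.dist_le_mul a b
    simpa [Real.dist_eq, Real.coe_toNNReal β hβ.le] using this
  have hmax : ∀ a b : ℝ, |max (a - ε) 0 - max (b - ε) 0| ≤ |a - b| := by
    intro a b
    have := abs_max_sub_max_le_abs (a - ε) (b - ε) 0
    simpa using this
  have hnn : ∀ x : ℝ, 0 ≤ ψ' (max (x - ε) 0) := by
    intro x
    have := hmono (le_max_right (x - ε) 0)
    rwa [hψ'0] at this
  have hle : ∀ x : ℝ, 0 ≤ x → ψ' (max (x - ε) 0) ≤ β * x := by
    intro x hx
    have h1 := hlipR (max (x - ε) 0) 0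
    rw [hψ'0, sub_zero, sub_zero, abs_of_nonneg (hnn x),
      abs_of_nonneg (le_max_right (x - ε) 0)] at h1
    have h2 : max (x - ε) 0 ≤ x := max_le (by linarith) hx
    nlinarith
  have key : ∀ x y : ℝ, 0 ≤ x → y ≤ 0 →
      |ψ' (max (x - ε) 0) - -(ψ' (max (-y - ε) 0))| ≤ β * |x - y| := by
    intro x y hx hy
    rw [sub_neg_eq_add, abs_of_nonneg (by linarith [hnn x, hnn (-y)]),
      abs_of_nonneg (by linarith : (0:ℝ) ≤ x - y)]
    have h1 := hle x hx
    have h2 := hle (-y) (by linarith)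
    linarith
  apply LipschitzWith.of_dist_le_mul
  intro x y
  rw [Real.dist_eq, Real.dist_eq, Real.coe_toNNReal β hβ.le]
  rcases le_total 0 x with hx | hx <;> rcases le_total 0 y with hy | hy
  · rw [sv_Dpos ε ψ' hε hψ'0 x hx, sv_Dpos ε ψ' hε hψ'0 y hy]
    exact (hlipR _ _).trans (by nlinarith [hmax x y])
  · rw [sv_Dpos ε ψ' hε hψ'0 x hx, sv_Dneg ε ψ' hε hψ'0 y hy]
    exact key x y hx hy
  · rw [sv_Dneg ε ψ' hε hψ'0 x hx, sv_Dpos ε ψ' hε hψ'0 y hy]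
    rw [abs_sub_comm, abs_sub_comm x y]
    exact key y x hy hx
  · rw [sv_Dneg ε ψ' hε hψ'0 x hx, sv_Dneg ε ψ' hε hψ'0 y hy]
    have h1 := hlipR (max (-y - ε) 0) (max (-x - ε) 0)
    have h2 := hmax (-y) (-x)
    rw [show (-y) - (-x) = x - y by ring] at h2
    rw [show -(ψ' (max (-x - ε) 0)) - -(ψ' (max (-y - ε) 0))
        = ψ' (max (-y - ε) 0) - ψ' (max (-x - ε) 0) by ring]
    nlinarith
end
lemma sv_key_ineq' (ε : ℝ) (hε : 0 < ε) (x u : ℝ) (hx : 0 < x) :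
    (x - max (|u| - ε) 0) ^ 2 ≤ (x + ε - u) ^ 2 := by
  rcases le_total ε |u| with h | h
  · rw [max_eq_left (by linarith)]
    rcases abs_cases u with ⟨h1, _⟩ | ⟨h1, _⟩ <;> nlinarith
  · rw [max_eq_right (by linarith)]
    rcases abs_cases u with ⟨h1, _⟩ | ⟨h1, _⟩ <;> nlinarith

lemma sv_prox (ε γ : ℝ) (hε : 0 < ε) (hγ : 0 < γ)
    (ψ φ : ℝ → ℝ) (heven : ∀ t, ψ (-t) = ψ t) (hconv : ConvexOn ℝ Set.univ ψ)
    (hφconv : ConvexOn ℝ Set.univ φ)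
    (hdef : ∀ ξ, φ ξ = ψ (max (|ξ| - ε) 0)) (ξ q p : ℝ)
    (hq : ∀ t : ℝ, γ * ψ q + ((|ξ| - ε) - q) ^ 2 / 2 ≤ γ * ψ t + ((|ξ| - ε) - t) ^ 2 / 2)
    (hp : ∀ t : ℝ, γ * φ p + (ξ - p) ^ 2 / 2 ≤ γ * φ t + (ξ - t) ^ 2 / 2) :
    (ε < |ξ| → p = (ε + q) * Real.sign ξ) ∧ (|ξ| ≤ ε → p = ξ) := by
  have hmin : ∀ u : ℝ, ψ 0 ≤ ψ u := by
    intro u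
    have h2 := hconv.2 (Set.mem_univ u) (Set.mem_univ (-u))
      (by norm_num : (0:ℝ) ≤ 1/2) (by norm_num : (0:ℝ) ≤ 1/2) (by norm_num)
    simp only [smul_eq_mul] at h2
    rw [show (1/2 : ℝ) * u + (1/2 : ℝ) * (-u) = 0 by ring, heven] at h2
    linarith
  constructor
  · intro h
    set s := Real.sign ξ with hsdef
    clear_value s
    have hξne : ξ ≠ 0 := by
      intro h0; rw [h0, abs_zero] at h; linarith
    have hs1 : (s = 1 ∧ ξ = |ξ|) ∨ (s = -1 ∧ ξ = -|ξ|) := by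
      rcases lt_or_gt_of_ne hξne with h0 | h0
      · right
        refine ⟨hsdef.trans (Real.sign_of_neg h0), ?_⟩
        rw [abs_of_neg h0, neg_neg]
      · left
        exact ⟨hsdef.trans (Real.sign_of_pos h0), (abs_of_pos h0).symm⟩
    set x := |ξ| - ε with hxdef
    clear_value x
    have hx : 0 < x := by rw [hxdef]; linarith
    have hq0 : 0 ≤ q := by
      have h7 := hq (-q)
      rw [heven] at h7
      nlinarith
    set p0 := (ε + q) * s with hp0def
    clear_value p0
    have habs : |p0| = ε + q := by
      rcases hs1 with ⟨h1, _⟩ | ⟨h1, _⟩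
      · rw [hp0def, h1, mul_one]; exact abs_of_pos (by linarith)
      · rw [hp0def, h1, mul_neg_one, abs_neg]; exact abs_of_pos (by linarith)
    have hφp0 : φ p0 = ψ q := by
      rw [hdef, habs, show ε + q - ε = q by ring, max_eq_left hq0]
    have hsq : (ξ - p0) ^ 2 = (x - q) ^ 2 := by
      rcases hs1 with ⟨h1, h2⟩ | ⟨h1, h2⟩
      · rw [show ξ - p0 = x - q by rw [hp0def, h1, hxdef]; linarith]
      · rw [show ξ - p0 = -(x - q) by rw [hp0def, h1, hxdef]; linarith]
        ring
    have hkey : ∀ t : ℝ, (x - max (|t| - ε) 0) ^ 2 ≤ (ξ - t) ^ 2 := by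
      intro t
      have h6 : |s * t| = |t| := by
        rcases hs1 with ⟨h1, _⟩ | ⟨h1, _⟩ <;> rw [h1] <;> simp
      have h5 : (ξ - t) ^ 2 = (x + ε - s * t) ^ 2 := by
        rcases hs1 with ⟨h1, h2⟩ | ⟨h1, h2⟩
        · rw [show ξ - t = x + ε - s * t by rw [h1, hxdef]; linarith]
        · rw [show ξ - t = -(x + ε - s * t) by rw [h1, hxdef]; linarith]
          ring
      rw [h5, ← h6]
      exact sv_key_ineq' ε hε x (s * t) hx
    have Fp0min : ∀ t : ℝ, γ * φ p0 + (ξ - p0) ^ 2 / 2 ≤ γ * φ t + (ξ - t) ^ 2 / 2 := by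
      intro t
      have h7 := hq (max (|t| - ε) 0)
      have h8 := hkey t
      rw [hφp0, hsq, hdef t]
      linarith
    have hA := hp p0
    have hB := hp ((p + p0) / 2)
    have hC := Fp0min p
    have hconvmid : φ ((p + p0) / 2) ≤ (1/2) * φ p + (1/2) * φ p0 := by
      have h2 := hφconv.2 (Set.mem_univ p) (Set.mem_univ p0)
        (by norm_num : (0:ℝ) ≤ 1/2) (by norm_num : (0:ℝ) ≤ 1/2) (by norm_num)
      simp only [smul_eq_mul] at h2
      rw [show (1/2 : ℝ) * p + (1/2 : ℝ) * p0 = (p + p0) / 2 by ring] at h2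
      exact h2
    have hne : γ * φ ((p + p0) / 2) ≤ γ * ((1/2) * φ p + (1/2) * φ p0) :=
      mul_le_mul_of_nonneg_left hconvmid hγ.le
    have h0 : (p - p0) ^ 2 = 0 := le_antisymm (by nlinarith) (sq_nonneg _)
    have := sq_eq_zero_iff.mp h0
    rw [hp0def] at this ⊢
    linarith
  · intro h
    have hφξ : φ ξ = ψ 0 := by rw [hdef, max_eq_right (by linarith)]
    have h1 := hp ξ
    rw [hφξ] at h1
    have h2 : ψ 0 ≤ φ p := by rw [hdef]; exact hmin _
    have h0 : (ξ - p) ^ 2 = 0 := by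
      nlinarith [sq_nonneg (ξ - p), mul_le_mul_of_nonneg_left h2 hγ.le]
    have := sq_eq_zero_iff.mp h0
    linarith

/-- Let `ε > 0`, `β > 0`, `ψ : ℝ → ℝ` even convex differentiable with a
`β`-Lipschitzian derivative, and define the smoothed Vapnik loss
`φ ξ = ψ (max (|ξ| − ε) 0)`.  Then `φ` is convex and differentiable with a
`β`-Lipschitzian derivative; `φ'(ξ) = ψ'(|ξ| − ε)·sign ξ` if `|ξ| > ε`, `φ'(ξ) = 0` if
`|ξ| ≤ ε`; and for every `γ > 0` and `ξ`, `prox_{γφ} ξ = (ε + prox_{γψ}(|ξ| − ε))·sign ξ`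
if `|ξ| > ε`, while `prox_{γφ} ξ = ξ` if `|ξ| ≤ ε`. -/
theorem stmt_7 (ε : ℝ) (hε : 0 < ε) (β : ℝ) (hβ : 0 < β)
    (ψ : ℝ → ℝ) (heven : ∀ t, ψ (-t) = ψ t) (hconv : ConvexOn ℝ Set.univ ψ)
    (ψ' : ℝ → ℝ) (hderiv : ∀ t, HasDerivAt ψ (ψ' t) t)
    (hlip : LipschitzWith (Real.toNNReal β) ψ')
    (φ : ℝ → ℝ) (hdef : ∀ ξ, φ ξ = ψ (max (|ξ| - ε) 0)) :
    ConvexOn ℝ Set.univ φ ∧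
    (∀ ξ, DifferentiableAt ℝ φ ξ) ∧
    LipschitzWith (Real.toNNReal β) (deriv φ) ∧
    (∀ ξ : ℝ,
      (ε < |ξ| → HasDerivAt φ (ψ' (|ξ| - ε) * Real.sign ξ) ξ) ∧
      (|ξ| ≤ ε → HasDerivAt φ 0 ξ)) ∧
    (∀ γ : ℝ, 0 < γ → ∀ ξ q p : ℝ,
      -- `q = prox_{γψ}(|ξ| − ε)` :
      (∀ t : ℝ, γ * ψ q + ((|ξ| - ε) - q) ^ 2 / 2 ≤ γ * ψ t + ((|ξ| - ε) - t) ^ 2 / 2) →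
      -- `p = prox_{γφ} ξ` :
      (∀ t : ℝ, γ * φ p + (ξ - p) ^ 2 / 2 ≤ γ * φ t + (ξ - t) ^ 2 / 2) →
      (ε < |ξ| → p = (ε + q) * Real.sign ξ) ∧ (|ξ| ≤ ε → p = ξ)) := by
  have hψ'0 : ψ' 0 = 0 := sv_psi'0 ψ ψ' heven hderiv
  have hmonoψ' : Monotone ψ' := sv_mono ψ ψ' hconv hderiv
  have hD : ∀ ξ : ℝ, HasDerivAt φ (ψ' (max (|ξ| - ε) 0) * Real.sign ξ) ξ :=
    sv_hasDeriv ε β hε hβ ψ ψ' hψ'0 hderiv hlip φ hdef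
  have hdφ : deriv φ = fun ξ : ℝ => ψ' (max (|ξ| - ε) 0) * Real.sign ξ :=
    funext fun ξ => (hD ξ).deriv
  have hdiff : ∀ ξ, DifferentiableAt ℝ φ ξ := fun ξ => (hD ξ).differentiableAt
  have hφconv : ConvexOn ℝ Set.univ φ := by
    apply Monotone.convexOn_univ_of_deriv (fun ξ => hdiff ξ)
    rw [hdφ]
    exact sv_Dmono ε ψ' hε hψ'0 hmonoψ'
  refine ⟨hφconv, hdiff, ?_, ?_, ?_⟩
  · rw [hdφ]
    exact sv_Dlip ε β ψ' hε hβ hψ'0 hmonoψ' hlip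
  · intro ξ
    constructor
    · intro h
      have h1 := hD ξ
      rwa [max_eq_left (by linarith)] at h1
    · intro h
      have h1 := hD ξ
      rwa [max_eq_right (by linarith), hψ'0, zero_mul] at h1
  · intro γ hγ ξ q p hq hp
    exact sv_prox ε γ hε hγ ψ φ heven hconv hφconv hdef ξ q p hq hp
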